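/- For every positive integer N there exists a 2-connected undirected graph G on 7N+2 vertices with positive integer edge weights, with a set C of N+2 customer/facility vertices, such that the minimum unconstrained path-disjoint cover of C has size 2, while every pathwise-disjoint cover of C (using only shortest paths) has size at least N. Hence the unconstrained path-disjoint lower bound can underestimate the optimal pathwise-disjoint cover size by a factor linear in the number of vertices. -/

import Mathlib

/-- `IsDiPath A a b p` asserts that the list of vertices `p` is a simple directed
path from `a` to `b` in the directed graph with arc relation `A`. -/
def IsDiPath {V : Type*} (A : V → V → Prop) (a b : V) (p : List V) : Prop :=
  p.head? = some a ∧ p.getLast? = some b ∧ List.Chain' A p ∧ p.Nodup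

/-- The arcs traversed by a path: the list of consecutive pairs of vertices. -/
def pathArcs {V : Type*} (p : List V) : List (V × V) :=
  p.zip p.tail

/-- The total weight of a path: the sum of the weights of its arcs. -/
def pathWeight {V : Type*} (w : V → V → ℝ) (p : List V) : ℝ :=
  ((p.zip p.tail).map fun e => w e.1 e.2).sum

/-- `p` is a shortest (minimum total weight) directed path from `a` to `b`. -/
def IsShortestDiPath {V : Type*} (A : V → V → Prop) (w : V → V → ℝ) (a b : V)
    (p : List V) : Prop :=
  IsDiPath A a b p ∧ ∀ q, IsDiPath A a b q → pathWeight w p ≤ pathWeight w q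

/-- The pair `{f₁, f₂}` covers `c` in a pathwise-disjoint fashion: there are shortest
paths from `c` to `f₁` and from `c` to `f₂` with no common vertex except `c`. -/
def CoversPathwise {V : Type*} (A : V → V → Prop) (w : V → V → ℝ) (c f₁ f₂ : V) : Prop :=
  ∃ p₁ p₂, IsShortestDiPath A w c f₁ p₁ ∧ IsShortestDiPath A w c f₂ p₂ ∧
    ∀ v ∈ p₁, v ∈ p₂ → v = c

/-- The pair `{f₁, f₂}` covers `c` in a setwise-disjoint fashion: no shortest path
from `c` to `f₁` shares a vertex other than `c` with any shortest path from `c` to `f₂`. -/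
def CoversSetwise {V : Type*} (A : V → V → Prop) (w : V → V → ℝ) (c f₁ f₂ : V) : Prop :=
  ∀ p₁ p₂, IsShortestDiPath A w c f₁ p₁ → IsShortestDiPath A w c f₂ p₂ →
    ∀ v ∈ p₁, v ∈ p₂ → v = c

/-- `F'` is a pathwise-disjoint cover for the customers `C` (facilities drawn from `F`). -/
def IsPathwiseCover {V : Type*} (A : V → V → Prop) (w : V → V → ℝ) (C F F' : Set V) : Prop :=
  F' ⊆ F ∧ ∀ c ∈ C, c ∉ F' → ∃ f₁ ∈ F', ∃ f₂ ∈ F', f₁ ≠ f₂ ∧ f₁ ≠ c ∧ f₂ ≠ c ∧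
    CoversPathwise A w c f₁ f₂

/-- `F'` is a setwise-disjoint cover for the customers `C` (facilities drawn from `F`). -/
def IsSetwiseCover {V : Type*} (A : V → V → Prop) (w : V → V → ℝ) (C F F' : Set V) : Prop :=
  F' ⊆ F ∧ ∀ c ∈ C, c ∉ F' → ∃ f₁ ∈ F', ∃ f₂ ∈ F', f₁ ≠ f₂ ∧ f₁ ≠ c ∧ f₂ ≠ c ∧
    CoversSetwise A w c f₁ f₂

/-- The pair `{f₁, f₂}` covers `c` with arbitrary (not necessarily shortest)
vertex-disjoint paths. -/
def CoversUnconstrained {V : Type*} (A : V → V → Prop) (c f₁ f₂ : V) : Prop :=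
  ∃ p q, IsDiPath A c f₁ p ∧ IsDiPath A c f₂ q ∧ ∀ x ∈ p, x ∈ q → x = c

/-- `F'` is an unconstrained path-disjoint cover for the customers `C`
(facilities drawn from `F`). -/
def IsUnconstrainedCover {V : Type*} (A : V → V → Prop) (C F F' : Set V) : Prop :=
  F' ⊆ F ∧ ∀ c ∈ C, c ∉ F' → ∃ f₁ ∈ F', ∃ f₂ ∈ F', f₁ ≠ f₂ ∧ f₁ ≠ c ∧ f₂ ≠ c ∧
    CoversUnconstrained A c f₁ f₂

/-- An undirected graph is 2-connected if it has at least 3 vertices and remains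
connected after the deletion of any single vertex. -/
def TwoConnected {V : Type*} (G : SimpleGraph V) : Prop :=
  3 ≤ Nat.card V ∧ ∀ v : V, (G.induce {u | u ≠ v}).Connected


/-! ### Auxiliary constructions for the proof -/

lemma aux_two_le_length {V : Type*} {A : V → V → Prop} {a b : V} {p : List V}
    (h : IsDiPath A a b p) (hab : a ≠ b) : 2 ≤ p.length := by
  obtain ⟨h1, h2, -, -⟩ := h
  match p with
  | [] => simp at h1
  | [x] =>
    simp only [List.head?_cons, Option.some.injEq] at h1
    simp only [List.getLast?_singleton, Option.some.injEq] at h2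
    exact absurd (h1 ▸ h2) hab
  | x :: y :: t => simp

lemma aux_five_le {V : Type*} (w : V → V → ℝ) (p : List V) (hlen : 2 ≤ p.length)
    (hw : ∀ x ∈ p, ∀ y ∈ p, w x y = 5) : 5 ≤ pathWeight w p := by
  have hall : ∀ r ∈ (p.zip p.tail).map (fun e => w e.1 e.2), r = (5:ℝ) := by
    intro r hr
    simp only [List.mem_map] at hr
    obtain ⟨e, he, rfl⟩ := hr
    exact hw _ (List.of_mem_zip he).1 _ (List.mem_of_mem_tail (List.of_mem_zip he).2)
  have hzlen : 1 ≤ ((p.zip p.tail).map (fun e => w e.1 e.2)).length := by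
    simp only [List.length_map, List.length_zip, List.length_tail]
    omega
  rw [pathWeight, List.sum_eq_card_nsmul _ 5 hall]
  calc (5:ℝ) = 1 • (5:ℝ) := by simp
    _ ≤ _ := nsmul_le_nsmul_left (by norm_num : (0:ℝ) ≤ 5) hzlen

lemma aux_dipath3 {V : Type*} {A : V → V → Prop} {a b c : V} (hab : A a b) (hbc : A b c)
    (h1 : a ≠ b) (h2 : a ≠ c) (h3 : b ≠ c) : IsDiPath A a c [a, b, c] := by
  refine ⟨rfl, rfl, ?_, ?_⟩ <;> simp [hab, hbc, h1, h2, h3, List.isChain_cons_cons, List.Chain']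

/-- The double-star graph on `Fin n`: vertices `0` and `1` are hubs, adjacent to
everything; there are no other edges. -/
def hubGraph (n : ℕ) : SimpleGraph (Fin n) where
  Adj x y := x ≠ y ∧ (x.val < 2 ∨ y.val < 2)
  symm := ⟨fun _ _ h => ⟨h.1.symm, h.2.symm⟩⟩
  loopless := ⟨fun _ h => h.1 rfl⟩

/-- Weights: edges incident to hub `0` have weight `1`, all others weight `5`. -/
def hubW (n : ℕ) (x y : Fin n) : ℕ := if x.val = 0 ∨ y.val = 0 then 1 else 5

lemma hubGraph_adj {n : ℕ} {x y : Fin n} (hxy : x ≠ y) (h : x.val < 2 ∨ y.val < 2) :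
    (hubGraph n).Adj x y := ⟨hxy, h⟩

lemma hub_path_dipath {n : ℕ} (hn : 0 < n) {c g : Fin n} (hc : 2 ≤ c.val) (hg : 2 ≤ g.val)
    (hcg : c ≠ g) : IsDiPath (hubGraph n).Adj c g [c, ⟨0, hn⟩, g] := by
  have h1 : c ≠ ⟨0, hn⟩ := by intro h; simp [Fin.ext_iff] at h; omega
  have h3 : (⟨0, hn⟩ : Fin n) ≠ g := by intro h; simp [Fin.ext_iff] at h; omega
  exact aux_dipath3 (hubGraph_adj h1 (Or.inr (by simp)))
    (hubGraph_adj h3 (Or.inl (by simp))) h1 hcg h3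

lemma hub_path_weight {n : ℕ} (hn : 0 < n) (c g : Fin n) :
    pathWeight (fun u v => ((hubW n u v : ℕ) : ℝ)) [c, ⟨0, hn⟩, g] = 2 := by
  simp [pathWeight, hubW]; norm_num

/-- Every shortest path between two non-hub vertices passes through the hub `0`. -/
lemma hub_mem_shortest {n : ℕ} (hn : 0 < n) {c g : Fin n} (hc : 2 ≤ c.val) (hg : 2 ≤ g.val)
    (hcg : c ≠ g) {p : List (Fin n)}
    (hp : IsShortestDiPath (hubGraph n).Adj (fun u v => ((hubW n u v : ℕ) : ℝ)) c g p) :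
    (⟨0, hn⟩ : Fin n) ∈ p := by
  by_contra hz
  have hw5 : ∀ x ∈ p, ∀ y ∈ p, ((hubW n x y : ℕ) : ℝ) = 5 := by
    intro x hx y hy
    have hx0 : x.val ≠ 0 := fun h => hz (by rwa [show x = ⟨0, hn⟩ from Fin.ext h] at hx)
    have hy0 : y.val ≠ 0 := fun h => hz (by rwa [show y = ⟨0, hn⟩ from Fin.ext h] at hy)
    simp [hubW, hx0, hy0]
  have h5 := aux_five_le _ p (aux_two_le_length hp.1 hcg) hw5
  have hle := hp.2 _ (hub_path_dipath hn hc hg hcg)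
  rw [hub_path_weight] at hle
  linarith

/-- The customers: the `N + 2` vertices with values `2, …, N + 3`. -/
def custF (N : ℕ) (hN : 0 < N) : Fin (N + 2) → Fin (7 * N + 2) :=
  fun i => ⟨i.val + 2, by have := i.isLt; omega⟩

def custC (N : ℕ) (hN : 0 < N) : Set (Fin (7 * N + 2)) := Set.range (custF N hN)

lemma custC_val {N : ℕ} {hN : 0 < N} {c : Fin (7 * N + 2)} (h : c ∈ custC N hN) :
    2 ≤ c.val ∧ c.val < N + 4 := by
  obtain ⟨i, rfl⟩ := h
  have := i.isLt
  constructor <;> simp [custF] <;> omega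

lemma custC_ncard (N : ℕ) (hN : 0 < N) : (custC N hN).ncard = N + 2 := by
  have hinj : Function.Injective (custF N hN) := by
    intro i j h
    have : i.val + 2 = j.val + 2 := congrArg Fin.val h
    exact Fin.ext (by omega)
  rw [custC, ← Set.image_univ, Set.ncard_image_of_injective _ hinj, Set.ncard_univ]
  simp

lemma hubGraph_twoConnected {n : ℕ} (hn : 3 ≤ n) : TwoConnected (hubGraph n) := by
  constructor
  · simpa using hn
  · intro v
    obtain ⟨h, hhv, hh2⟩ : ∃ h : Fin n, h ≠ v ∧ h.val < 2 := by
      by_cases hv : v.val = 0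
      · refine ⟨⟨1, by omega⟩, fun he => ?_, by simp⟩
        rw [← he] at hv; simp at hv
      · exact ⟨⟨0, by omega⟩, fun he => hv (by rw [← he]), by simp⟩
    rw [SimpleGraph.connected_iff]
    have key : ∀ a : {u : Fin n | u ≠ v},
        ((hubGraph n).induce {u : Fin n | u ≠ v}).Reachable a ⟨h, hhv⟩ := by
      intro a
      by_cases ha : a = ⟨h, hhv⟩
      · exact ha ▸ SimpleGraph.Reachable.refl _
      · exact SimpleGraph.Adj.reachable
          ⟨fun he => ha (Subtype.ext he), Or.inr hh2⟩
    exact ⟨fun a b => (key a).trans (key b).symm, ⟨⟨h, hhv⟩⟩⟩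

lemma cover2_exists (N : ℕ) (hN : 0 < N) :
    ∃ F', IsUnconstrainedCover (hubGraph (7 * N + 2)).Adj (custC N hN) (custC N hN) F' ∧
      F'.ncard = 2 := by
  have hn : (9 : ℕ) ≤ 7 * N + 2 := by omega
  set f₁ : Fin (7 * N + 2) := custF N hN ⟨0, by omega⟩ with hf₁
  set f₂ : Fin (7 * N + 2) := custF N hN ⟨1, by omega⟩ with hf₂
  have hf₁v : f₁.val = 2 := rfl
  have hf₂v : f₂.val = 3 := rfl
  have hf₁₂ : f₁ ≠ f₂ := by simp [Fin.ext_iff, hf₁v, hf₂v]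
  refine ⟨{f₁, f₂}, ⟨?_, ?_⟩, Set.ncard_pair hf₁₂⟩
  · intro x hx
    rcases hx with rfl | rfl
    · exact ⟨_, rfl⟩
    · exact ⟨_, rfl⟩
  · intro c hcC hcF
    obtain ⟨hc2, -⟩ := custC_val hcC
    have hcf₁ : c ≠ f₁ := fun he => hcF (by rw [he]; exact Set.mem_insert _ _)
    have hcf₂ : c ≠ f₂ := fun he => hcF (by rw [he]; right; rfl)
    have hc4 : 4 ≤ c.val := by
      have e1 : c.val ≠ 2 := fun h => hcf₁ (Fin.ext (h.trans hf₁v.symm))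
      have e2 : c.val ≠ 3 := fun h => hcf₂ (Fin.ext (h.trans hf₂v.symm))
      omega
    refine ⟨f₁, Set.mem_insert _ _, f₂, by right; rfl, hf₁₂, hcf₁.symm, hcf₂.symm,
      [c, ⟨0, by omega⟩, f₁], [c, ⟨1, by omega⟩, f₂], ?_, ?_, ?_⟩
    · refine aux_dipath3 ⟨?_, Or.inr (by simp)⟩ ⟨?_, Or.inl (by simp)⟩ ?_ hcf₁ ?_ <;>
        simp only [ne_eq, Fin.ext_iff, hf₁v] <;> omega
    · refine aux_dipath3 ⟨?_, Or.inr (by simp)⟩ ⟨?_, Or.inl (by simp)⟩ ?_ hcf₂ ?_ <;>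
        simp only [ne_eq, Fin.ext_iff, hf₂v] <;> omega
    · intro x hx hxq
      simp only [List.mem_cons, List.not_mem_nil, or_false] at hx hxq
      refine Fin.ext ?_
      rcases hx with rfl | rfl | rfl <;> rcases hxq with h | h | h <;>
        simp_all [Fin.ext_iff, hf₁v, hf₂v] <;> omega


/-- For every `N ≥ 1` there is a 2-connected undirected graph on
`7N + 2` vertices with positive integer symmetric edge weights and a set `C` of
`N + 2` customer/facility vertices, for which the minimum unconstrained path-disjoint
cover of `C` has size `2` while every pathwise-disjoint (shortest-path) cover of `C`
has size at least `N`. -/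
theorem updfl_lower_bound_linear_gap_instances (N : ℕ) (hN : 0 < N) :
    ∃ (V : Type) (_ : Finite V) (G : SimpleGraph V) (w : V → V → ℕ) (C : Set V),
      Nat.card V = 7 * N + 2 ∧
      TwoConnected G ∧
      (∀ x y, G.Adj x y → 0 < w x y ∧ w x y = w y x) ∧
      C.ncard = N + 2 ∧
      (∃ F', IsUnconstrainedCover G.Adj C C F' ∧ F'.ncard = 2) ∧
      (∀ F', IsUnconstrainedCover G.Adj C C F' → 2 ≤ F'.ncard) ∧
      (∀ F', IsPathwiseCover G.Adj (fun u v => (w u v : ℝ)) C C F' → N ≤ F'.ncard) := by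
  refine ⟨Fin (7 * N + 2), inferInstance, hubGraph (7 * N + 2), hubW (7 * N + 2),
    custC N hN, by simp, hubGraph_twoConnected (by omega), ?_, custC_ncard N hN,
    cover2_exists N hN, ?_, ?_⟩
  · intro x y _
    refine ⟨?_, by simp [hubW, or_comm]⟩
    unfold hubW; split_ifs <;> norm_num
  · rintro F' ⟨hsub, hcov⟩
    by_contra hlt
    push_neg at hlt
    have hCc := custC_ncard N hN
    have hnsub : ¬ custC N hN ⊆ F' := fun hs => by
      have := Set.ncard_le_ncard hs (Set.toFinite F'); omega
    obtain ⟨c, hcC, hcF⟩ := Set.not_subset.mp hnsub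
    obtain ⟨g₁, hg₁, g₂, hg₂, hne, -, -, -⟩ := hcov c hcC hcF
    have hpair : ({g₁, g₂} : Set (Fin (7 * N + 2))) ⊆ F' := by
      intro x hx; rcases hx with rfl | rfl; exacts [hg₁, hg₂]
    have := Set.ncard_le_ncard hpair (Set.toFinite F')
    rw [Set.ncard_pair hne] at this
    omega
  · rintro F' ⟨hsub, hcov⟩
    have hCsub : custC N hN ⊆ F' := by
      intro c hcC
      by_contra hcF
      obtain ⟨g₁, hg₁, g₂, hg₂, -, hne1, hne2, p₁, p₂, hs₁, hs₂, hdisj⟩ := hcov c hcC hcF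
      obtain ⟨hc2, -⟩ := custC_val hcC
      obtain ⟨hg₁2, -⟩ := custC_val (hsub hg₁)
      obtain ⟨hg₂2, -⟩ := custC_val (hsub hg₂)
      have hn0 : 0 < 7 * N + 2 := by omega
      have hz₁ := hub_mem_shortest hn0 hc2 hg₁2 hne1.symm hs₁
      have hz₂ := hub_mem_shortest hn0 hc2 hg₂2 hne2.symm hs₂
      have hzc := hdisj _ hz₁ hz₂
      have := congrArg Fin.val hzc
      simp at this
      omega
    have h1 := Set.ncard_le_ncard hCsub (Set.toFinite F')
    have hCc := custC_ncard N hN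
    omega
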